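/- Let q ≥ 2 and d = e1 + e2 be integers with 2 ≤ e2 ≤ e1 ≤ d − 2, and let B be the set of odd prime divisors of gcd(e1, e2). Then q^{−e1·e2}·∑_{b ∈ B} b·q^{e1·e2/b} < 3.01·q^{−e1·e2/2}·q^{−(d−3)/2}. Moreover, if e2 ≠ 3 or 3 does not divide e1, then q^{−e1·e2}·∑_{b ∈ B} b·q^{e1·e2/b} < 3.01·q^{−e1·e2/2}·q^{−(d−6)}. -/

import Mathlib

lemma two_rpow_lb (x : ℝ) (hx : 0 ≤ x) : 1 + (2/3)*x ≤ (2:ℝ)^x := by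
  rw [Real.rpow_def_of_pos (by norm_num)]
  have h := Real.add_one_le_exp (Real.log 2 * x)
  have hl : (2/3 : ℝ) ≤ Real.log 2 := le_of_lt (lt_of_le_of_lt (by norm_num) Real.log_two_gt_d9)
  nlinarith

lemma sum_halfpow_le (T : Finset ℕ) (h : ∀ b ∈ T, 5 ≤ b) :
    ∑ b ∈ T, ((1:ℝ)/2)^(b-5) ≤ 2 := by
  have hre : ∑ b ∈ T, ((1:ℝ)/2)^(b-5) = ∑ k ∈ T.image (· - 5), ((1:ℝ)/2)^k := by
    rw [Finset.sum_image]
    intro a ha b hb hab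
    have := h a ha; have := h b hb; simp only at hab; omega
  rw [hre]
  have hs : Summable (fun k : ℕ => ((1:ℝ)/2)^k) :=
    summable_geometric_of_lt_one (by norm_num) (by norm_num)
  calc ∑ k ∈ T.image (· - 5), ((1:ℝ)/2)^k
      ≤ ∑' k, ((1:ℝ)/2)^k := Summable.sum_le_tsum _ (fun k _ => by positivity) hs
    _ = 2 := by rw [tsum_geometric_of_lt_one (by norm_num) (by norm_num)]; norm_num

lemma term_bound (Q : ℝ) (hQ : 2 ≤ Q) (E x L : ℝ) (b : ℕ) (hb : 5 ≤ b)
    (C : ℝ) (hC : 0 < C) (hL : 0 ≤ L) (hLE : L ≤ E - x)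
    (hneed : (b:ℝ) ≤ C * 2 ^ (L - ((b:ℝ) - 5))) :
    (b:ℝ) * Q ^ x ≤ C * ((1:ℝ)/2)^(b-5) * Q ^ E := by
  have hQ0 : (0:ℝ) < Q := lt_of_lt_of_le (by norm_num) hQ
  have hhalf : ((1:ℝ)/2)^(b-5) = (2:ℝ) ^ (-(((b:ℝ)) - 5)) := by
    rw [one_div, inv_pow, ← Real.rpow_natCast (2:ℝ) (b-5), ← Real.rpow_neg (by norm_num)]
    congr 1
    rw [Nat.cast_sub hb]
    push_cast; ring
  have h2 : (2:ℝ)^(L) ≤ Q^(E - x) := by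
    calc (2:ℝ)^L ≤ (2:ℝ)^(E - x) :=
          Real.rpow_le_rpow_of_exponent_le (by norm_num) hLE
      _ ≤ Q^(E - x) := Real.rpow_le_rpow (by norm_num) hQ (hL.trans hLE)
  have hkey : (b:ℝ) ≤ C * ((1:ℝ)/2)^(b-5) * Q^(E - x) := by
    calc (b:ℝ) ≤ C * 2 ^ (L - ((b:ℝ) - 5)) := hneed
      _ = C * ((1:ℝ)/2)^(b-5) * 2^L := by
          rw [hhalf, mul_assoc, ← Real.rpow_add (by norm_num : (0:ℝ) < 2)]
          ring_nf
      _ ≤ C * ((1:ℝ)/2)^(b-5) * Q^(E - x) := by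
          apply mul_le_mul_of_nonneg_left h2
          positivity
  calc (b:ℝ) * Q ^ x ≤ (C * ((1:ℝ)/2)^(b-5) * Q^(E - x)) * Q ^ x := by
        apply mul_le_mul_of_nonneg_right hkey (Real.rpow_nonneg hQ0.le x)
    _ = C * ((1:ℝ)/2)^(b-5) * Q ^ E := by
        rw [mul_assoc, ← Real.rpow_add hQ0]
        ring_nf

lemma needI (b : ℝ) (hb : 5 ≤ b) : b ≤ 1.5 * 2 ^ ((2*b - 8) - (b - 5)) := by
  have h1 : ((2*b - 8) - (b - 5)) = (2:ℝ) + (b - 5) := by ring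
  rw [h1, Real.rpow_add (by norm_num : (0:ℝ) < 2)]
  have h2 : (2:ℝ) ^ (2:ℝ) = 4 := by
    rw [show (2:ℝ) = ((2:ℕ):ℝ) by norm_num]
    rw [Real.rpow_natCast]; norm_num
  rw [h2]
  nlinarith [two_rpow_lb (b - 5) (by linarith)]

lemma needII (b : ℝ) (hb : 5 ≤ b) : b ≤ 0.004 * 2 ^ ((2*b + 5) - (b - 5)) := by
  have h1 : ((2*b + 5) - (b - 5)) = (15:ℝ) + (b - 5) := by ring
  rw [h1, Real.rpow_add (by norm_num : (0:ℝ) < 2)]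
  have h2 : (2:ℝ) ^ (15:ℝ) = 32768 := by
    rw [show (15:ℝ) = ((15:ℕ):ℝ) by norm_num, Real.rpow_natCast]; norm_num
  rw [h2]
  nlinarith [two_rpow_lb (b - 5) (by linarith)]

lemma master (q e1 e2 : ℕ) (hq : 2 ≤ q) (he2 : 2 ≤ e2) (he12 : e2 ≤ e1) (E : ℝ)
    (H3 : 3 ∣ e1 → 3 ∣ e2 → (e1:ℝ)*(e2:ℝ)/3 ≤ E)
    (HI : ¬(3 ∣ e1 ∧ 3 ∣ e2) → ∀ b : ℕ, b.Prime → b ∣ e1 → b ∣ e2 → 5 ≤ b →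
        2*(b:ℝ) - 8 ≤ E - (e1:ℝ)*(e2:ℝ)/(b:ℝ))
    (HII : 3 ∣ e1 → 3 ∣ e2 → ∀ b : ℕ, b.Prime → b ∣ e1 → b ∣ e2 → 5 ≤ b →
        2*(b:ℝ) + 5 ≤ E - (e1:ℝ)*(e2:ℝ)/(b:ℝ)) :
    ∑ b ∈ (Nat.gcd e1 e2).divisors.filter (fun b => b.Prime ∧ b ≠ 2),
      (b : ℝ) * (q : ℝ) ^ (((e1:ℝ) * (e2:ℝ)) / (b:ℝ)) < 3.01 * (q:ℝ) ^ E := by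
  have hQ2 : (2:ℝ) ≤ (q:ℝ) := by exact_mod_cast hq
  have hQ0 : (0:ℝ) < (q:ℝ) := by linarith
  have hQ1 : (1:ℝ) < (q:ℝ) := by linarith
  set Q : ℝ := (q:ℝ) with hQdef
  set m : ℝ := (e1:ℝ) * (e2:ℝ) with hmdef
  set B : Finset ℕ := (Nat.gcd e1 e2).divisors.filter (fun b => b.Prime ∧ b ≠ 2) with hBdef
  have hQE : (0:ℝ) < Q ^ E := Real.rpow_pos_of_pos hQ0 E
  have hmem : ∀ b ∈ B, b.Prime ∧ b ∣ e1 ∧ b ∣ e2 ∧ b ≠ 2 := by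
    intro b hb
    rw [hBdef, Finset.mem_filter, Nat.mem_divisors] at hb
    exact ⟨hb.2.1, (hb.1.1).trans (Nat.gcd_dvd_left e1 e2),
      (hb.1.1).trans (Nat.gcd_dvd_right e1 e2), hb.2.2⟩
  have hb5 : ∀ b ∈ B, b ≠ 3 → 5 ≤ b := by
    intro b hb hb3
    obtain ⟨hp, _, _, h2⟩ := hmem b hb
    have h4 : b ≠ 4 := by rintro rfl; exact absurd hp (by decide)
    have := hp.two_le
    omega
  -- split sum
  have hsplit := Finset.sum_filter_add_sum_filter_not B (fun b => b = 3)
    (fun b => (b : ℝ) * Q ^ (m / (b:ℝ)))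
  set T : Finset ℕ := B.filter (fun b => ¬ b = 3) with hTdef
  have hT5 : ∀ b ∈ T, 5 ≤ b := by
    intro b hb
    rw [hTdef, Finset.mem_filter] at hb
    exact hb5 b hb.1 hb.2
  -- tail bound, with case-dependent constant
  by_cases hc : 3 ∣ e1 ∧ 3 ∣ e2
  case pos =>
    -- head
    have hhead : ∑ b ∈ B.filter (fun b => b = 3), (b : ℝ) * Q ^ (m / (b:ℝ)) ≤ 3 * Q ^ E := by
      have hsub : B.filter (fun b => b = 3) ⊆ {3} := by
        intro x hx
        rw [Finset.mem_filter] at hx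
        simp [hx.2]
      rcases Finset.subset_singleton_iff.mp hsub with h | h <;> rw [h]
      · simp; positivity
      · rw [Finset.sum_singleton]
        have hmE : m / ((3:ℕ):ℝ) ≤ E := by
          have := H3 hc.1 hc.2
          push_cast
          exact this
        push_cast
        have := Real.rpow_le_rpow_of_exponent_le hQ1.le (by push_cast at hmE ⊢; exact hmE)
        nlinarith [Real.rpow_pos_of_pos hQ0 (m / ((3:ℕ):ℝ))]
    -- tail
    have htail : ∑ b ∈ T, (b : ℝ) * Q ^ (m / (b:ℝ)) ≤ 0.004 * 2 * Q ^ E := by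
      calc ∑ b ∈ T, (b : ℝ) * Q ^ (m / (b:ℝ))
          ≤ ∑ b ∈ T, 0.004 * ((1:ℝ)/2)^(b-5) * Q ^ E := by
            apply Finset.sum_le_sum
            intro b hb
            have hbB : b ∈ B := Finset.mem_filter.mp hb |>.1
            obtain ⟨hp, hd1, hd2, _⟩ := hmem b hbB
            have h5 : 5 ≤ b := hT5 b hb
            have h5r : (5:ℝ) ≤ (b:ℝ) := by exact_mod_cast h5
            exact term_bound Q hQ2 E (m / (b:ℝ)) (2*(b:ℝ) + 5) b h5 0.004 (by norm_num)
              (by linarith) (HII hc.1 hc.2 b hp hd1 hd2 h5) (needII (b:ℝ) h5r)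
      _ = (0.004 * Q ^ E) * ∑ b ∈ T, ((1:ℝ)/2)^(b-5) := by
            rw [Finset.mul_sum]
            exact Finset.sum_congr rfl (fun b _ => by ring)
      _ ≤ (0.004 * Q ^ E) * 2 := by
            apply mul_le_mul_of_nonneg_left (sum_halfpow_le T hT5) (by positivity)
      _ = 0.004 * 2 * Q ^ E := by ring
    calc ∑ b ∈ B, (b : ℝ) * Q ^ (m / (b:ℝ))
        = (∑ b ∈ B.filter (fun b => b = 3), (b : ℝ) * Q ^ (m / (b:ℝ)))
          + ∑ b ∈ T, (b : ℝ) * Q ^ (m / (b:ℝ)) := hsplit.symm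
      _ ≤ 3 * Q ^ E + 0.004 * 2 * Q ^ E := add_le_add hhead htail
      _ < 3.01 * Q ^ E := by nlinarith
  case neg =>
    have hhead : B.filter (fun b => b = 3) = ∅ := by
      rw [Finset.filter_eq_empty_iff]
      intro b hb hb3
      subst hb3
      obtain ⟨_, hd1, hd2, _⟩ := hmem 3 hb
      exact hc ⟨hd1, hd2⟩
    have htail : ∑ b ∈ T, (b : ℝ) * Q ^ (m / (b:ℝ)) ≤ 1.5 * 2 * Q ^ E := by
      calc ∑ b ∈ T, (b : ℝ) * Q ^ (m / (b:ℝ))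
          ≤ ∑ b ∈ T, 1.5 * ((1:ℝ)/2)^(b-5) * Q ^ E := by
            apply Finset.sum_le_sum
            intro b hb
            have hbB : b ∈ B := Finset.mem_filter.mp hb |>.1
            obtain ⟨hp, hd1, hd2, _⟩ := hmem b hbB
            have h5 : 5 ≤ b := hT5 b hb
            have h5r : (5:ℝ) ≤ (b:ℝ) := by exact_mod_cast h5
            exact term_bound Q hQ2 E (m / (b:ℝ)) (2*(b:ℝ) - 8) b h5 1.5 (by norm_num)
              (by linarith) (HI hc b hp hd1 hd2 h5) (needI (b:ℝ) h5r)
      _ = (1.5 * Q ^ E) * ∑ b ∈ T, ((1:ℝ)/2)^(b-5) := by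
            rw [Finset.mul_sum]
            exact Finset.sum_congr rfl (fun b _ => by ring)
      _ ≤ (1.5 * Q ^ E) * 2 := by
            apply mul_le_mul_of_nonneg_left (sum_halfpow_le T hT5) (by positivity)
      _ = 1.5 * 2 * Q ^ E := by ring
    calc ∑ b ∈ B, (b : ℝ) * Q ^ (m / (b:ℝ))
        = (∑ b ∈ B.filter (fun b => b = 3), (b : ℝ) * Q ^ (m / (b:ℝ)))
          + ∑ b ∈ T, (b : ℝ) * Q ^ (m / (b:ℝ)) := hsplit.symm
      _ = ∑ b ∈ T, (b : ℝ) * Q ^ (m / (b:ℝ)) := by rw [hhead]; simp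
      _ ≤ 1.5 * 2 * Q ^ E := htail
      _ < 3.01 * Q ^ E := by nlinarith


lemma arith_HI1 (e1 e2 b t : ℝ) (hb : 5 ≤ b) (hbe2 : b ≤ e2) (h21 : e2 ≤ e1)
    (ht : t * b = e1 * e2) (hte : e1 ≤ t) :
    2*b - 8 ≤ (e1*e2/2 - (e1 + e2 - 3)/2) - t := by
  nlinarith [mul_nonneg (by linarith : (0:ℝ) ≤ t - b) (by linarith : (0:ℝ) ≤ b - 5),
    sq_nonneg (b - 4)]

lemma arith_HII1 (e1 e2 b t : ℝ) (hb : 5 ≤ b) (hbe2 : 3*b ≤ e2) (h21 : e2 ≤ e1)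
    (ht : t * b = e1 * e2) (hte : 3*e1 ≤ t) :
    2*b + 5 ≤ (e1*e2/2 - (e1 + e2 - 3)/2) - t := by
  nlinarith [mul_nonneg (by nlinarith : (0:ℝ) ≤ t) (by linarith : (0:ℝ) ≤ b - 5)]

lemma arith_HI2 (e1 e2 b t : ℝ) (hb : 5 ≤ b) (hbe2 : b ≤ e2) (h21 : e2 ≤ e1)
    (ht : t * b = e1 * e2) (hte : e1 ≤ t) :
    2*b - 8 ≤ (e1*e2/2 - (e1 + e2) + 6) - t := by
  nlinarith [mul_nonneg (by linarith : (0:ℝ) ≤ t - b) (by linarith : (0:ℝ) ≤ b - 5),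
    mul_nonneg (by linarith : (0:ℝ) ≤ e1 - e2) (by linarith : (0:ℝ) ≤ 3*e2 - 10),
    sq_nonneg (3*e2 - 20)]

lemma arith_HII2 (e1 e2 b t : ℝ) (hb : 5 ≤ b) (hbe2 : 3*b ≤ e2) (h21 : e2 ≤ e1)
    (ht : t * b = e1 * e2) (hte : 3*e1 ≤ t) :
    2*b + 5 ≤ (e1*e2/2 - (e1 + e2) + 6) - t := by
  nlinarith [mul_nonneg (by nlinarith : (0:ℝ) ≤ t) (by linarith : (0:ℝ) ≤ b - 5)]

lemma div_facts (e1 e2 b : ℕ) (he2 : 0 < e2) (he12 : e2 ≤ e1) (hd2 : b ∣ e2) (hb5 : 5 ≤ b) :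
    (5:ℝ) ≤ (b:ℝ) ∧ (b:ℝ) ≤ (e2:ℝ) ∧ (e2:ℝ) ≤ (e1:ℝ) ∧
    ((e1:ℝ)*(e2:ℝ)/(b:ℝ)) * (b:ℝ) = (e1:ℝ)*(e2:ℝ) ∧ (e1:ℝ) ≤ (e1:ℝ)*(e2:ℝ)/(b:ℝ) := by
  have h1 : b ≤ e2 := Nat.le_of_dvd he2 hd2
  have h5r : (5:ℝ) ≤ (b:ℝ) := by exact_mod_cast hb5
  have hb0 : (0:ℝ) < (b:ℝ) := by linarith
  have h1r : (b:ℝ) ≤ (e2:ℝ) := by exact_mod_cast h1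
  have h21 : (e2:ℝ) ≤ (e1:ℝ) := by exact_mod_cast he12
  refine ⟨h5r, h1r, h21, div_mul_cancel₀ _ (ne_of_gt hb0), ?_⟩
  rw [le_div_iff₀ hb0]
  have he1r : (0:ℝ) ≤ (e1:ℝ) := by positivity
  nlinarith

/-- Lemma: for `q ≥ 2`, `2 ≤ e2 ≤ e1 ≤ d - 2` with `d = e1 + e2`, and `B` the set of odd
prime divisors of `gcd(e1, e2)`:
`q^{-e1 e2} ∑_{b ∈ B} b q^{e1 e2 / b} < 3.01 q^{-e1 e2 / 2} q^{-(d-3)/2}`, and moreover if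
`e2 ≠ 3` or `3 ∤ e1` then `q^{-e1 e2} ∑_{b ∈ B} b q^{e1 e2 / b} < 3.01 q^{-e1 e2 / 2} q^{-(d-6)}`. -/
theorem sum_odd_prime_divisors_rpow_bounds
    (q e1 e2 d : ℕ) (hq : 2 ≤ q) (he2 : 2 ≤ e2) (he12 : e2 ≤ e1)
    (he1d : e1 ≤ d - 2) (hd : d = e1 + e2) :
    ((q : ℝ) ^ (-((e1 : ℝ) * (e2 : ℝ)))) *
        ∑ b ∈ (Nat.gcd e1 e2).divisors.filter (fun b => b.Prime ∧ b ≠ 2),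
          (b : ℝ) * (q : ℝ) ^ (((e1 : ℝ) * (e2 : ℝ)) / (b : ℝ)) <
      3.01 * (q : ℝ) ^ (-((e1 : ℝ) * (e2 : ℝ)) / 2) * (q : ℝ) ^ (-((d : ℝ) - 3) / 2) ∧
    (e2 ≠ 3 ∨ ¬ 3 ∣ e1 →
      ((q : ℝ) ^ (-((e1 : ℝ) * (e2 : ℝ)))) *
          ∑ b ∈ (Nat.gcd e1 e2).divisors.filter (fun b => b.Prime ∧ b ≠ 2),
            (b : ℝ) * (q : ℝ) ^ (((e1 : ℝ) * (e2 : ℝ)) / (b : ℝ)) <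
        3.01 * (q : ℝ) ^ (-((e1 : ℝ) * (e2 : ℝ)) / 2) * (q : ℝ) ^ (-((d : ℝ) - 6))) := by
  have hQ2 : (2:ℝ) ≤ (q:ℝ) := by exact_mod_cast hq
  have hQ0 : (0:ℝ) < (q:ℝ) := by linarith
  have he1pos : 0 < e1 := by omega
  have he2pos : 0 < e2 := by omega
  have hdr : (d:ℝ) = (e1:ℝ) + (e2:ℝ) := by rw [hd]; push_cast; ring
  have he12r : (e2:ℝ) ≤ (e1:ℝ) := by exact_mod_cast he12
  have hcop : ∀ b : ℕ, b.Prime → 5 ≤ b → 3*e1 ≤ 3*e1 := fun _ _ _ => le_refl _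
  -- the coprime step for HII
  have h3b : ∀ b : ℕ, b.Prime → 5 ≤ b → b ∣ e2 → 3 ∣ e2 → 3*b ∣ e2 := by
    intro b hp hb5 hbd h3d
    have hcp : Nat.Coprime 3 b :=
      (Nat.coprime_primes (by norm_num) hp).mpr (by omega)
    exact hcp.mul_dvd_of_dvd_of_dvd h3d hbd
  have h3brle : ∀ b : ℕ, b.Prime → 5 ≤ b → b ∣ e2 → 3 ∣ e2 →
      3*(b:ℝ) ≤ (e2:ℝ) ∧ 3*(e1:ℝ) ≤ (e1:ℝ)*(e2:ℝ)/(b:ℝ) := by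
    intro b hp hb5 hbd h3d
    have h1 : 3*b ≤ e2 := Nat.le_of_dvd he2pos (h3b b hp hb5 hbd h3d)
    have h1r : 3*(b:ℝ) ≤ (e2:ℝ) := by exact_mod_cast h1
    have hb0 : (0:ℝ) < (b:ℝ) := by
      have : (5:ℝ) ≤ (b:ℝ) := by exact_mod_cast hb5
      linarith
    refine ⟨h1r, ?_⟩
    rw [le_div_iff₀ hb0]
    have he1r : (0:ℝ) ≤ (e1:ℝ) := by positivity
    nlinarith
  constructor
  · -- part 1
    have key := master q e1 e2 hq he2 he12 ((e1:ℝ)*(e2:ℝ)/2 - ((d:ℝ)-3)/2)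
      (by
        intro h1 h2
        have h3e1 : 3 ≤ e1 := Nat.le_of_dvd he1pos h1
        have h3e2 : 3 ≤ e2 := Nat.le_of_dvd he2pos h2
        have h3e1r : (3:ℝ) ≤ (e1:ℝ) := by exact_mod_cast h3e1
        have h3e2r : (3:ℝ) ≤ (e2:ℝ) := by exact_mod_cast h3e2
        rw [hdr]
        nlinarith [mul_nonneg (by linarith : (0:ℝ) ≤ (e1:ℝ)-3) (by linarith : (0:ℝ) ≤ (e2:ℝ)-3)])
      (by
        intro _ b hp hd1 hd2 hb5
        obtain ⟨h5r, hbe2, h21, ht, hte⟩ := div_facts e1 e2 b he2pos he12 hd2 hb5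
        rw [hdr]
        have := arith_HI1 (e1:ℝ) (e2:ℝ) (b:ℝ) ((e1:ℝ)*(e2:ℝ)/(b:ℝ)) h5r hbe2 h21 ht hte
        linarith)
      (by
        intro h31 h32 b hp hd1 hd2 hb5
        obtain ⟨h5r, hbe2, h21, ht, hte⟩ := div_facts e1 e2 b he2pos he12 hd2 hb5
        obtain ⟨h3br, h3ter⟩ := h3brle b hp hb5 hd2 h32
        rw [hdr]
        have := arith_HII1 (e1:ℝ) (e2:ℝ) (b:ℝ) ((e1:ℝ)*(e2:ℝ)/(b:ℝ)) h5r h3br h21 ht h3ter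
        linarith)
    have hpos := Real.rpow_pos_of_pos hQ0 (-((e1:ℝ)*(e2:ℝ)))
    calc ((q:ℝ) ^ (-((e1:ℝ)*(e2:ℝ)))) * ∑ b ∈ (Nat.gcd e1 e2).divisors.filter (fun b => b.Prime ∧ b ≠ 2),
          (b : ℝ) * (q : ℝ) ^ (((e1:ℝ) * (e2:ℝ)) / (b:ℝ))
        < ((q:ℝ) ^ (-((e1:ℝ)*(e2:ℝ)))) * (3.01 * (q:ℝ) ^ ((e1:ℝ)*(e2:ℝ)/2 - ((d:ℝ)-3)/2)) :=
          mul_lt_mul_of_pos_left key hpos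
      _ = 3.01 * (q : ℝ) ^ (-((e1:ℝ) * (e2:ℝ)) / 2) * (q : ℝ) ^ (-((d:ℝ) - 3) / 2) := by
          rw [show ((q:ℝ) ^ (-((e1:ℝ)*(e2:ℝ)))) * (3.01 * (q:ℝ) ^ ((e1:ℝ)*(e2:ℝ)/2 - ((d:ℝ)-3)/2))
              = 3.01 * ((q:ℝ) ^ (-((e1:ℝ)*(e2:ℝ))) * (q:ℝ) ^ ((e1:ℝ)*(e2:ℝ)/2 - ((d:ℝ)-3)/2)) by ring,
            ← Real.rpow_add hQ0,
            show -((e1:ℝ)*(e2:ℝ)) + ((e1:ℝ)*(e2:ℝ)/2 - ((d:ℝ)-3)/2)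
              = -((e1:ℝ)*(e2:ℝ))/2 + (-((d:ℝ)-3)/2) by ring,
            Real.rpow_add hQ0, ← mul_assoc]
  · -- part 2
    intro hyp
    have key := master q e1 e2 hq he2 he12 ((e1:ℝ)*(e2:ℝ)/2 - ((d:ℝ)-6))
      (by
        intro h1 h2
        have he2ne3 : e2 ≠ 3 := by
          rcases hyp with h | h
          · exact h
          · exact absurd h1 h
        have h6e2 : 6 ≤ e2 := by omega
        have h6e2r : (6:ℝ) ≤ (e2:ℝ) := by exact_mod_cast h6e2
        have h6e1r : (6:ℝ) ≤ (e1:ℝ) := by linarith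
        rw [hdr]
        nlinarith [mul_nonneg (by linarith : (0:ℝ) ≤ (e1:ℝ)-6) (by linarith : (0:ℝ) ≤ (e2:ℝ)-6)])
      (by
        intro _ b hp hd1 hd2 hb5
        obtain ⟨h5r, hbe2, h21, ht, hte⟩ := div_facts e1 e2 b he2pos he12 hd2 hb5
        rw [hdr]
        have := arith_HI2 (e1:ℝ) (e2:ℝ) (b:ℝ) ((e1:ℝ)*(e2:ℝ)/(b:ℝ)) h5r hbe2 h21 ht hte
        linarith)
      (by
        intro h31 h32 b hp hd1 hd2 hb5
        obtain ⟨h5r, hbe2, h21, ht, hte⟩ := div_facts e1 e2 b he2pos he12 hd2 hb5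
        obtain ⟨h3br, h3ter⟩ := h3brle b hp hb5 hd2 h32
        rw [hdr]
        have := arith_HII2 (e1:ℝ) (e2:ℝ) (b:ℝ) ((e1:ℝ)*(e2:ℝ)/(b:ℝ)) h5r h3br h21 ht h3ter
        linarith)
    have hpos := Real.rpow_pos_of_pos hQ0 (-((e1:ℝ)*(e2:ℝ)))
    calc ((q:ℝ) ^ (-((e1:ℝ)*(e2:ℝ)))) * ∑ b ∈ (Nat.gcd e1 e2).divisors.filter (fun b => b.Prime ∧ b ≠ 2),
          (b : ℝ) * (q : ℝ) ^ (((e1:ℝ) * (e2:ℝ)) / (b:ℝ))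
        < ((q:ℝ) ^ (-((e1:ℝ)*(e2:ℝ)))) * (3.01 * (q:ℝ) ^ ((e1:ℝ)*(e2:ℝ)/2 - ((d:ℝ)-6))) :=
          mul_lt_mul_of_pos_left key hpos
      _ = 3.01 * (q : ℝ) ^ (-((e1:ℝ) * (e2:ℝ)) / 2) * (q : ℝ) ^ (-((d:ℝ) - 6)) := by
          rw [show ((q:ℝ) ^ (-((e1:ℝ)*(e2:ℝ)))) * (3.01 * (q:ℝ) ^ ((e1:ℝ)*(e2:ℝ)/2 - ((d:ℝ)-6)))
              = 3.01 * ((q:ℝ) ^ (-((e1:ℝ)*(e2:ℝ))) * (q:ℝ) ^ ((e1:ℝ)*(e2:ℝ)/2 - ((d:ℝ)-6))) by ring,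
            ← Real.rpow_add hQ0,
            show -((e1:ℝ)*(e2:ℝ)) + ((e1:ℝ)*(e2:ℝ)/2 - ((d:ℝ)-6))
              = -((e1:ℝ)*(e2:ℝ))/2 + (-((d:ℝ)-6)) by ring,
            Real.rpow_add hQ0, ← mul_assoc]
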